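/- The function f(p) = (2p − sin 2p)/(8 sin² p) is strictly increasing on the open interval (0, π). -/

import Mathlib

open Real

lemma aux_sin_sub_mul_cos_pos {x : ℝ} (hx : x ∈ Set.Ioo 0 π) :
    0 < sin x - x * cos x := by
  obtain ⟨h0, hπ⟩ := hx
  have hs : 0 < sin x := sin_pos_of_pos_of_lt_pi h0 hπ
  rcases le_or_gt (cos x) 0 with hc | hc
  · nlinarith [mul_nonpos_of_nonneg_of_nonpos h0.le hc]
  · have hlt : x < π / 2 := by
      by_contra h
      push_neg at h
      exact absurd (cos_nonpos_of_pi_div_two_le_of_le h (by linarith [pi_pos])) (not_le.mpr hc)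
    have := Real.lt_tan h0 hlt
    rw [Real.tan_eq_sin_div_cos] at this
    have : x * cos x < sin x := by
      rwa [lt_div_iff₀ hc] at this
    linarith

/-- The function `p ↦ (2p − sin 2p)/(8 sin² p)` is strictly increasing on `(0, π)`. -/
theorem heisenberg_distance_function_strictMono :
    StrictMonoOn (fun p : ℝ => (2 * p - sin (2 * p)) / (8 * sin p ^ 2))
      (Set.Ioo 0 π) := by
  apply strictMonoOn_of_deriv_pos (convex_Ioo 0 π)
  · apply ContinuousOn.div
    · fun_prop
    · fun_prop
    · intro x hx
      have hs : 0 < sin x := sin_pos_of_pos_of_lt_pi hx.1 hx.2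
      positivity
  · intro x hx
    rw [interior_Ioo] at hx
    have hs : 0 < sin x := sin_pos_of_pos_of_lt_pi hx.1 hx.2
    have hne : 8 * sin x ^ 2 ≠ 0 := by positivity
    have h1 : HasDerivAt (fun p : ℝ => 2 * p - sin (2 * p)) (2 - cos (2 * x) * 2) x := by
      have := ((hasDerivAt_id x).const_mul 2).sin
      have h := ((hasDerivAt_id x).const_mul 2).sub
        (((hasDerivAt_id x).const_mul 2).sin)
      simp at h
      exact h
    have h2 : HasDerivAt (fun p : ℝ => 8 * sin p ^ 2) (8 * (2 * sin x ^ 1 * cos x)) x := by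
      exact ((hasDerivAt_sin x).pow 2).const_mul 8
    have h := h1.div h2 hne
    rw [HasDerivAt.deriv (f := fun p : ℝ => (2 * p - sin (2 * p)) / (8 * sin p ^ 2)) h]
    have key := aux_sin_sub_mul_cos_pos hx
    have hsc := sin_sq_add_cos_sq x
    have hnum : (2 - cos (2 * x) * 2) * (8 * sin x ^ 2) -
        (2 * x - sin (2 * x)) * (8 * (2 * sin x ^ 1 * cos x))
        = 32 * sin x * (sin x - x * cos x) := by
      rw [cos_two_mul, sin_two_mul]
      ring_nf
    rw [hnum]
    positivity
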